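/- For any squarefree positive integer q ≥ 2, ∑_{p | q, p prime} p^{-1/2} ≤ C·√(ω(q)/log(ω(q)+2)) for an absolute constant C, where ω(q) is the number of distinct prime divisors of q. -/

import Mathlib

open Finset



/-- Chebyshev: sum of log p over primes ≤ N is ≤ N log 4. -/
lemma theta_le (N : ℕ) :
    ∑ p ∈ Finset.filter Nat.Prime (Finset.range (N+1)), Real.log p ≤ N * Real.log 4 := by
  have h := primorial_le_4_pow N
  have hpos : (0:ℝ) < (primorial N : ℝ) := by exact_mod_cast (primorial_pos N)
  have h2 : Real.log (primorial N) ≤ Real.log ((4:ℝ)^N) := by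
    apply Real.log_le_log hpos
    exact_mod_cast h
  rw [Real.log_pow] at h2
  have h3 : Real.log ((primorial N : ℕ) : ℝ)
      = ∑ p ∈ Finset.filter Nat.Prime (Finset.range (N+1)), Real.log p := by
    rw [primorial]
    push_cast
    rw [Real.log_prod]
    intro p hp
    simp only [Finset.mem_filter] at hp
    exact_mod_cast hp.2.pos.ne'
  rw [h3] at h2
  exact_mod_cast h2


noncomputable def AA : ℝ := (2 * Real.log 4) / (Real.sqrt 2 - 1)

lemma sqrt2_gt_one : (1:ℝ) < Real.sqrt 2 := by
  have : (1:ℝ) = Real.sqrt 1 := (Real.sqrt_one).symm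
  rw [this]
  exact Real.sqrt_lt_sqrt (by norm_num) (by norm_num)

lemma AA_pos : 0 < AA := by
  apply div_pos
  · have : (1:ℝ) < 4 := by norm_num
    nlinarith [Real.log_pos this]
  · linarith [sqrt2_gt_one]

lemma HH_pow (j : ℕ) :
    ∑ p ∈ Finset.filter Nat.Prime (Finset.range (2^j+1)), Real.log p / Real.sqrt p
      ≤ AA * (Real.sqrt 2)^j := by
  induction j with
  | zero =>
      have h0 : Finset.filter Nat.Prime (Finset.range 2) = ∅ := by decide
      simp [h0]
      nlinarith [AA_pos]
  | succ j ih =>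
    have hab : 2^j + 1 ≤ 2^(j+1) + 1 := by
      have : 2^j ≤ 2^(j+1) := Nat.pow_le_pow_right (by norm_num) (by omega)
      omega
    have hsplit : ∑ p ∈ Finset.filter Nat.Prime (Finset.range (2^(j+1)+1)),
          Real.log p / Real.sqrt p
        = (∑ p ∈ Finset.filter Nat.Prime (Finset.range (2^j+1)), Real.log p / Real.sqrt p) +
          ∑ p ∈ Finset.filter Nat.Prime (Finset.Ico (2^j+1) (2^(j+1)+1)),
            Real.log p / Real.sqrt p := by
      rw [Finset.range_eq_Ico,
        ← Finset.Ico_union_Ico_eq_Ico (Nat.zero_le _) hab, Finset.filter_union,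
        Finset.sum_union
          (Finset.disjoint_filter_filter (Finset.Ico_disjoint_Ico_consecutive _ _ _))]
      rw [← Finset.range_eq_Ico]
    rw [hsplit]
    have hsq : (Real.sqrt 2)^j * (Real.sqrt 2)^j = 2^j := by
      rw [← mul_pow, Real.mul_self_sqrt (by norm_num)]
    have hsjpos : (0:ℝ) < (Real.sqrt 2)^j := by positivity
    have hsqrtpow : Real.sqrt ((2:ℝ)^j) = (Real.sqrt 2)^j := by
      rw [← hsq, Real.sqrt_mul_self hsjpos.le]
    have hnum : ∑ p ∈ Finset.filter Nat.Prime (Finset.Ico (2^j+1) (2^(j+1)+1)),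
        Real.log p ≤ (2^(j+1) : ℕ) * Real.log 4 := by
      refine le_trans (Finset.sum_le_sum_of_subset_of_nonneg ?_ ?_) (theta_le (2^(j+1)))
      · rw [Finset.range_eq_Ico]
        exact Finset.filter_subset_filter _ (Finset.Ico_subset_Ico (Nat.zero_le _) le_rfl)
      · intro p hp _
        simp only [Finset.mem_filter] at hp
        exact Real.log_nonneg (by exact_mod_cast hp.2.one_lt.le)
    have hbound : ∑ p ∈ Finset.filter Nat.Prime (Finset.Ico (2^j+1) (2^(j+1)+1)),
        Real.log p / Real.sqrt p ≤ (2 * Real.log 4) * (Real.sqrt 2)^j := by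
      have h1 : ∀ p ∈ Finset.filter Nat.Prime (Finset.Ico (2^j+1) (2^(j+1)+1)),
          Real.log p / Real.sqrt p ≤ Real.log p / (Real.sqrt 2)^j := by
        intro p hp
        simp only [Finset.mem_filter, Finset.mem_Ico] at hp
        apply div_le_div_of_nonneg_left (Real.log_nonneg (by exact_mod_cast hp.2.one_lt.le))
          hsjpos
        rw [← hsqrtpow]
        apply Real.sqrt_le_sqrt
        exact_mod_cast (Nat.lt_of_lt_of_le (Nat.lt_succ_self _) hp.1.1).le
      calc ∑ p ∈ Finset.filter Nat.Prime (Finset.Ico (2^j+1) (2^(j+1)+1)),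
            Real.log p / Real.sqrt p
          ≤ ∑ p ∈ Finset.filter Nat.Prime (Finset.Ico (2^j+1) (2^(j+1)+1)),
            Real.log p / (Real.sqrt 2)^j := Finset.sum_le_sum h1
        _ = (∑ p ∈ Finset.filter Nat.Prime (Finset.Ico (2^j+1) (2^(j+1)+1)),
            Real.log p) / (Real.sqrt 2)^j := by rw [Finset.sum_div]
        _ ≤ ((2^(j+1) : ℕ) * Real.log 4) / (Real.sqrt 2)^j := by gcongr
        _ = (2 * Real.log 4) * (Real.sqrt 2)^j := by
            rw [div_eq_iff hsjpos.ne']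
            push_cast
            rw [pow_succ]
            have hsq2 : Real.sqrt 2 ^ (j*2) = 2^j := by
              rw [mul_comm, pow_mul, Real.sq_sqrt (by norm_num : (0:ℝ) ≤ 2)]
            linear_combination (-2 * Real.log 4) * hsq2
    have key : AA * (Real.sqrt 2)^j + (2 * Real.log 4) * (Real.sqrt 2)^j
        = AA * (Real.sqrt 2)^(j+1) := by
      have h2 : Real.sqrt 2 - 1 ≠ 0 := by linarith [sqrt2_gt_one]
      rw [pow_succ]
      field_simp [AA]
      have hA : AA * (Real.sqrt 2 - 1) = 2 * Real.log 4 := div_mul_cancel₀ _ h2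
      linear_combination -hA
    linarith [ih]


lemma HH_le {N : ℕ} (hN : 1 ≤ N) :
    ∑ p ∈ Finset.filter Nat.Prime (Finset.range (N+1)), Real.log p / Real.sqrt p
      ≤ AA * Real.sqrt 2 * Real.sqrt N := by
  set j := Nat.log 2 N + 1 with hj
  have h1 : N < 2^j := Nat.lt_pow_succ_log_self (by norm_num) N
  have h2 : 2^j ≤ 2*N := by
    rw [hj, pow_succ, mul_comm]
    exact Nat.mul_le_mul_left 2 (Nat.pow_log_le_self 2 (by omega))
  have hsub : ∑ p ∈ Finset.filter Nat.Prime (Finset.range (N+1)), Real.log p / Real.sqrt p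
      ≤ ∑ p ∈ Finset.filter Nat.Prime (Finset.range (2^j+1)), Real.log p / Real.sqrt p := by
    apply Finset.sum_le_sum_of_subset_of_nonneg
    · exact Finset.filter_subset_filter _ (Finset.range_subset_range.2 (by omega))
    · intro p hp _
      simp only [Finset.mem_filter] at hp
      have h3 : (1:ℝ) ≤ p := by exact_mod_cast hp.2.one_lt.le
      have := Real.log_nonneg h3
      have : (0:ℝ) < Real.sqrt p := Real.sqrt_pos.2 (by linarith)
      positivity
  have hsq : (Real.sqrt 2)^j = Real.sqrt ((2:ℝ)^j) := by
    rw [show ((2:ℝ)^j) = ((Real.sqrt 2)^j)^2 by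
      rw [← pow_mul, mul_comm, pow_mul, Real.sq_sqrt (by norm_num : (0:ℝ) ≤ 2)],
      Real.sqrt_sq (by positivity)]
  have hle : Real.sqrt ((2:ℝ)^j) ≤ Real.sqrt 2 * Real.sqrt N := by
    rw [← Real.sqrt_mul (by norm_num : (0:ℝ) ≤ 2)]
    apply Real.sqrt_le_sqrt
    exact_mod_cast h2
  calc ∑ p ∈ Finset.filter Nat.Prime (Finset.range (N+1)), Real.log p / Real.sqrt p
      ≤ AA * (Real.sqrt 2)^j := hsub.trans (HH_pow j)
    _ = AA * Real.sqrt ((2:ℝ)^j) := by rw [hsq]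
    _ ≤ AA * (Real.sqrt 2 * Real.sqrt N) := by
        exact mul_le_mul_of_nonneg_left hle AA_pos.le
    _ = AA * Real.sqrt 2 * Real.sqrt N := by ring

lemma one_div_sqrt_succ_le (m : ℕ) :
    1 / Real.sqrt (m+1) ≤ 2 * (Real.sqrt (m+1) - Real.sqrt m) := by
  have hs : Real.sqrt ((m:ℝ)+1) ^ 2 = (m:ℝ)+1 := Real.sq_sqrt (by positivity)
  have ht : Real.sqrt (m:ℝ) ^ 2 = (m:ℝ) := Real.sq_sqrt (by positivity)
  have hspos : 0 < Real.sqrt ((m:ℝ)+1) := Real.sqrt_pos.2 (by positivity)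
  have htnn : 0 ≤ Real.sqrt (m:ℝ) := Real.sqrt_nonneg _
  rw [div_le_iff₀ hspos]
  nlinarith [sq_nonneg (Real.sqrt ((m:ℝ)+1) - Real.sqrt m)]

lemma sum_sqrt_inv_le (m : ℕ) :
    ∑ i ∈ Finset.range (m+1), (if Nat.Prime i then 1 / Real.sqrt i else 0)
      ≤ 2 * Real.sqrt m := by
  induction m with
  | zero => simp [Nat.not_prime_zero]
  | succ m ih =>
    rw [Finset.sum_range_succ]
    have h1 : (if Nat.Prime (m+1) then 1 / Real.sqrt (m+1) else 0)
        ≤ 2 * (Real.sqrt (m+1) - Real.sqrt m) := by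
      split
      · exact_mod_cast one_div_sqrt_succ_le m
      · have : Real.sqrt m ≤ Real.sqrt (m+1) := Real.sqrt_le_sqrt (by push_cast; linarith)
        linarith
    push_cast at h1 ⊢
    linarith


noncomputable def BB : ℝ := 8 + 2 * (AA * Real.sqrt 2)

lemma BB_pos : 0 < BB := by
  have := AA_pos
  have h2 : 0 < Real.sqrt 2 := Real.sqrt_pos.2 (by norm_num)
  unfold BB; nlinarith

lemma G_le {N : ℕ} (hN : 2 ≤ N) :
    ∑ p ∈ Finset.filter Nat.Prime (Finset.range (N+1)), 1 / Real.sqrt p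
      ≤ BB * Real.sqrt N / Real.log N := by
  set m := Nat.sqrt N with hm
  have hlogN : 0 < Real.log N := Real.log_pos (by exact_mod_cast hN)
  have hterm_nonneg : ∀ p : ℕ, p.Prime → (0:ℝ) ≤ 1 / Real.sqrt p := by
    intro p hp
    have : (0:ℝ) < Real.sqrt p := Real.sqrt_pos.2 (by exact_mod_cast hp.pos)
    positivity
  have hsplit := Finset.sum_filter_add_sum_filter_not
    (Finset.filter Nat.Prime (Finset.range (N+1))) (fun p => p ≤ m)
    (fun p => 1 / Real.sqrt (p:ℝ))
  -- part 1 : small primes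
  have hpart1 : ∑ p ∈ (Finset.filter Nat.Prime (Finset.range (N+1))).filter (fun p => p ≤ m),
      1 / Real.sqrt (p:ℝ) ≤ 2 * Real.sqrt m := by
    have hss : (Finset.filter Nat.Prime (Finset.range (N+1))).filter (fun p => p ≤ m)
        ⊆ Finset.filter Nat.Prime (Finset.range (m+1)) := by
      intro p hp
      simp only [Finset.mem_filter, Finset.mem_range] at hp ⊢
      exact ⟨by omega, hp.1.2⟩
    refine le_trans (Finset.sum_le_sum_of_subset_of_nonneg hss ?_) ?_
    · intro p hp _
      simp only [Finset.mem_filter] at hp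
      exact hterm_nonneg p hp.2
    · rw [Finset.sum_filter]
      exact sum_sqrt_inv_le m
  -- part 2 : large primes
  have hpart2 : ∑ p ∈ (Finset.filter Nat.Prime (Finset.range (N+1))).filter (fun p => ¬ p ≤ m),
      1 / Real.sqrt (p:ℝ) ≤ 2 / Real.log N * (AA * Real.sqrt 2 * Real.sqrt N) := by
    have hstep : ∀ p ∈ (Finset.filter Nat.Prime (Finset.range (N+1))).filter (fun p => ¬ p ≤ m),
        1 / Real.sqrt (p:ℝ) ≤ 2 / Real.log N * (Real.log p / Real.sqrt p) := by
      intro p hp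
      simp only [Finset.mem_filter, Finset.mem_range, not_le] at hp
      have hppos : (0:ℝ) < Real.sqrt p := Real.sqrt_pos.2 (by exact_mod_cast hp.1.2.pos)
      have hNp : (N:ℝ) < (p:ℝ)^2 := by
        have h1 : N < (m+1)*(m+1) := Nat.lt_succ_sqrt N
        have h2 : (m+1)*(m+1) ≤ p*p := Nat.mul_le_mul hp.2 hp.2
        have : N < p*p := lt_of_lt_of_le h1 h2
        exact_mod_cast (by nlinarith : (N:ℕ) < p^2)
      have hlogp : Real.log N ≤ 2 * Real.log p := by
        calc Real.log N ≤ Real.log ((p:ℝ)^2) :=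
              Real.log_le_log (by positivity) hNp.le
          _ = 2 * Real.log p := by rw [Real.log_pow]; push_cast; ring
      have h1 : (1:ℝ) ≤ 2 * Real.log p / Real.log N := by
        rw [le_div_iff₀ hlogN]; linarith
      calc 1 / Real.sqrt (p:ℝ) ≤ (2 * Real.log p / Real.log N) * (1 / Real.sqrt p) := by
            nlinarith [hterm_nonneg p hp.1.2]
        _ = 2 / Real.log N * (Real.log p / Real.sqrt p) := by ring
    calc ∑ p ∈ (Finset.filter Nat.Prime (Finset.range (N+1))).filter (fun p => ¬ p ≤ m),
          1 / Real.sqrt (p:ℝ)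
        ≤ ∑ p ∈ (Finset.filter Nat.Prime (Finset.range (N+1))).filter (fun p => ¬ p ≤ m),
          2 / Real.log N * (Real.log p / Real.sqrt p) := Finset.sum_le_sum hstep
      _ = 2 / Real.log N * ∑ p ∈ (Finset.filter Nat.Prime
            (Finset.range (N+1))).filter (fun p => ¬ p ≤ m),
          (Real.log p / Real.sqrt p) := by rw [Finset.mul_sum]
      _ ≤ 2 / Real.log N * ∑ p ∈ Finset.filter Nat.Prime (Finset.range (N+1)),
          (Real.log p / Real.sqrt p) := by
          apply mul_le_mul_of_nonneg_left ?_ (by positivity)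
          apply Finset.sum_le_sum_of_subset_of_nonneg (Finset.filter_subset _ _)
          intro p hp _
          simp only [Finset.mem_filter] at hp
          have h3 : (1:ℝ) ≤ p := by exact_mod_cast hp.2.one_lt.le
          have := Real.log_nonneg h3
          have : (0:ℝ) < Real.sqrt p := Real.sqrt_pos.2 (by linarith)
          positivity
      _ ≤ 2 / Real.log N * (AA * Real.sqrt 2 * Real.sqrt N) := by
          apply mul_le_mul_of_nonneg_left (HH_le (by omega)) (by positivity)
  -- small part bound: 2√m ≤ 8√N / log N
  have hsmall : 2 * Real.sqrt m ≤ 8 * Real.sqrt N / Real.log N := by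
    set y := Real.sqrt (Real.sqrt N) with hy
    have hsN : (0:ℝ) ≤ Real.sqrt N := Real.sqrt_nonneg _
    have hy2 : y^2 = Real.sqrt N := Real.sq_sqrt hsN
    have hNpos : (0:ℝ) < (N:ℝ) := by positivity
    have hypos : 0 < y := Real.sqrt_pos.2 (Real.sqrt_pos.2 hNpos)
    have hlogy : Real.log N = 4 * Real.log y := by
      rw [hy, Real.log_sqrt hsN, Real.log_sqrt (by positivity)]
      ring
    have hylb : Real.log y ≤ y := (Real.log_le_sub_one_of_pos hypos).trans (by linarith)
    have hmley : Real.sqrt m ≤ y := by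
      rw [hy]
      exact Real.sqrt_le_sqrt Real.nat_sqrt_le_real_sqrt
    rw [le_div_iff₀ hlogN]
    have hsm : (0:ℝ) ≤ Real.sqrt m := Real.sqrt_nonneg _
    nlinarith [hlogN]
  -- combine
  rw [← hsplit]
  have : BB * Real.sqrt N / Real.log N
      = 8 * Real.sqrt N / Real.log N + 2 / Real.log N * (AA * Real.sqrt 2 * Real.sqrt N) := by
    unfold BB; field_simp
  rw [this]
  exact add_le_add (hpart1.trans hsmall) hpart2


theorem sum_inv_sqrt_primes_dividing :
    ∃ C : ℝ, 0 < C ∧ ∀ q : ℕ, Squarefree q → 2 ≤ q →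
      ∑ p ∈ q.primeFactors, (1 / Real.sqrt (p : ℝ)) ≤
        C * Real.sqrt ((q.primeFactors.card : ℝ) /
          Real.log ((q.primeFactors.card : ℝ) + 2)) := by
  have hBB := BB_pos
  have h6 : (0:ℝ) ≤ Real.sqrt 6 := Real.sqrt_nonneg 6
  refine ⟨BB * Real.sqrt 6 + 1, by nlinarith, ?_⟩
  intro q _ hq
  set S := q.primeFactors with hS
  set k := S.card with hk
  have hk1 : 1 ≤ k := by
    rw [hk, hS]
    have : q.primeFactors.Nonempty := Nat.nonempty_primeFactors.2 (by omega)
    exact Finset.card_pos.2 this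
  have hkR : (1:ℝ) ≤ (k:ℝ) := by exact_mod_cast hk1
  set l := Real.log ((k:ℝ) + 2) with hl
  have hl1 : 1 ≤ l := by
    rw [hl]
    have h3 : (3:ℝ) ≤ (k:ℝ) + 2 := by linarith
    have : Real.exp 1 < 3 := by
      have := Real.exp_one_lt_d9
      linarith
    calc (1:ℝ) = Real.log (Real.exp 1) := (Real.log_exp 1).symm
      _ ≤ Real.log ((k:ℝ) + 2) := Real.log_le_log (Real.exp_pos 1) (by linarith)
  have hlpos : 0 < l := by linarith
  set L := Nat.ceil l with hL
  have hL1 : 1 ≤ L := Nat.one_le_ceil_iff.2 hlpos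
  have hLl : l ≤ (L:ℝ) := Nat.le_ceil l
  have hLub : (L:ℝ) ≤ 2 * l := by
    have := Nat.ceil_lt_add_one (le_of_lt hlpos)
    linarith
  set T := (k + 2) * L with hT
  have hT2 : 2 ≤ T := by
    have : 3 * 1 ≤ (k+2) * L := Nat.mul_le_mul (by omega) hL1
    omega
  have hTR : ((T:ℕ):ℝ) = ((k:ℝ)+2) * (L:ℝ) := by push_cast [hT]; ring
  have hTk : (k:ℝ) * l ≤ (T:ℝ) := by
    rw [hTR]
    have : (k:ℝ) ≤ (k:ℝ) + 2 := by linarith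
    nlinarith
  have hTle : (T:ℝ) ≤ 6 * ((k:ℝ) * l) := by
    rw [hTR]
    nlinarith
  have hlogT : l ≤ Real.log T := by
    rw [hl]
    apply Real.log_le_log (by positivity)
    rw [hTR]
    nlinarith
  have hklpos : (0:ℝ) < (k:ℝ) * l := by positivity
  have hsqkl : (0:ℝ) < Real.sqrt ((k:ℝ) * l) := Real.sqrt_pos.2 hklpos
  have hsqk : (0:ℝ) < Real.sqrt k := Real.sqrt_pos.2 (by linarith)
  have hsql : (0:ℝ) < Real.sqrt l := Real.sqrt_pos.2 hlpos
  -- split S at T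
  have hsplit := Finset.sum_filter_add_sum_filter_not S (fun p => p ≤ T)
    (fun p => 1 / Real.sqrt (p:ℝ))
  have hmem : ∀ p ∈ S, p.Prime := fun p hp => Nat.prime_of_mem_primeFactors hp
  -- part 1
  have hpart1 : ∑ p ∈ S.filter (fun p => p ≤ T), 1 / Real.sqrt (p:ℝ)
      ≤ BB * Real.sqrt 6 * (Real.sqrt k / Real.sqrt l) := by
    have hsub : S.filter (fun p => p ≤ T) ⊆ Finset.filter Nat.Prime (Finset.range (T+1)) := by
      intro p hp
      simp only [Finset.mem_filter, Finset.mem_range] at hp ⊢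
      exact ⟨by omega, hmem p hp.1⟩
    have h1 : ∑ p ∈ S.filter (fun p => p ≤ T), 1 / Real.sqrt (p:ℝ)
        ≤ BB * Real.sqrt T / Real.log T := by
      refine le_trans (Finset.sum_le_sum_of_subset_of_nonneg hsub ?_) (G_le hT2)
      intro p hp _
      positivity
    refine h1.trans ?_
    have hlogTpos : 0 < Real.log T := lt_of_lt_of_le hlpos hlogT
    have h2 : BB * Real.sqrt T / Real.log T ≤ BB * Real.sqrt T / l := by
      exact div_le_div_of_nonneg_left (mul_nonneg hBB.le (Real.sqrt_nonneg _)) hlpos hlogT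
    refine h2.trans ?_
    have h3 : Real.sqrt (T:ℝ) ≤ Real.sqrt 6 * Real.sqrt ((k:ℝ)*l) := by
      rw [← Real.sqrt_mul (by norm_num : (0:ℝ) ≤ 6)]
      exact Real.sqrt_le_sqrt hTle
    have h4 : BB * Real.sqrt T / l ≤ BB * (Real.sqrt 6 * Real.sqrt ((k:ℝ)*l)) / l :=
      (div_le_div_iff_of_pos_right hlpos).mpr (mul_le_mul_of_nonneg_left h3 hBB.le)
    refine h4.trans (le_of_eq ?_)
    have e1 : Real.sqrt ((k:ℝ)*l) = Real.sqrt k * Real.sqrt l :=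
      Real.sqrt_mul (by linarith) _
    have e3 : Real.sqrt l * Real.sqrt l = l := Real.mul_self_sqrt hlpos.le
    rw [e1]
    field_simp
    linear_combination e3
  -- part 2
  have hpart2 : ∑ p ∈ S.filter (fun p => ¬ p ≤ T), 1 / Real.sqrt (p:ℝ)
      ≤ Real.sqrt k / Real.sqrt l := by
    have hstep : ∀ p ∈ S.filter (fun p => ¬ p ≤ T),
        1 / Real.sqrt (p:ℝ) ≤ 1 / Real.sqrt ((k:ℝ)*l) := by
      intro p hp
      simp only [Finset.mem_filter, not_le] at hp
      apply one_div_le_one_div_of_le hsqkl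
      apply Real.sqrt_le_sqrt
      have : (T:ℝ) ≤ (p:ℝ) := by exact_mod_cast hp.2.le
      linarith [hTk]
    calc ∑ p ∈ S.filter (fun p => ¬ p ≤ T), 1 / Real.sqrt (p:ℝ)
        ≤ ∑ _p ∈ S.filter (fun p => ¬ p ≤ T), 1 / Real.sqrt ((k:ℝ)*l) :=
          Finset.sum_le_sum hstep
      _ = (S.filter (fun p => ¬ p ≤ T)).card * (1 / Real.sqrt ((k:ℝ)*l)) := by
          rw [Finset.sum_const, nsmul_eq_mul]
      _ ≤ (k:ℝ) * (1 / Real.sqrt ((k:ℝ)*l)) := by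
          apply mul_le_mul_of_nonneg_right ?_ (by positivity)
          exact_mod_cast Finset.card_filter_le S _
      _ = Real.sqrt k / Real.sqrt l := by
          have e1 : Real.sqrt ((k:ℝ)*l) = Real.sqrt k * Real.sqrt l :=
            Real.sqrt_mul (by linarith) _
          have e2 : Real.sqrt k * Real.sqrt k = (k:ℝ) := Real.mul_self_sqrt (by linarith)
          rw [e1]
          field_simp
          linear_combination -e2
  -- combine
  have hdiv : Real.sqrt ((k:ℝ) / l) = Real.sqrt k / Real.sqrt l := Real.sqrt_div (by linarith) _
  rw [hdiv, ← hsplit]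
  have hfinal : BB * Real.sqrt 6 * (Real.sqrt k / Real.sqrt l) + Real.sqrt k / Real.sqrt l
      = (BB * Real.sqrt 6 + 1) * (Real.sqrt k / Real.sqrt l) := by ring
  linarith [hpart1, hpart2]
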